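/- Let m ≥ 1, fix i ∈ {1,…,m}, let D_1,…,D_m be positive reals, let z be a real number, and let c, f : (0,∞) → ℝ be functions such that f is differentiable with f′(A) = −c(A) for every A > 0. Define π(A) = t₂(A)·(A+D_i)²·A·exp(f(A)). Then π is positive and differentiable on (0,∞), and for every A > 0, π′(A)/π(A) = l_i(A) − (1/2)·[ (B_i(A)/2 − 2)·(1/A) + 4·t₃(A)/t₂(A) ] − c(A) − z²·B_i(A)/(4A). (This is the verification, in Theorem 2 of the paper, that the matching prior π_i(A) ∝ tr[V^{−2}](A+D_i)²·A·exp{−∫((y_i−x_i′β̄)/(A+D_i))² dA} solves the probability-matching differential equation ρ₁ = d/dA log π(A).) -/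

import Mathlib

open Finset

/-- Verification that the matching prior
`pr(A) = tr[V⁻²]·(A+Dᵢ)²·A·exp(f(A))` (with `f' = -c`) solves the
probability-matching differential equation of Theorem 2 of the paper. -/
theorem matching_prior_solves_ode
    (m : ℕ) (hm : 1 ≤ m) (D : Fin m → ℝ) (hD : ∀ u, 0 < D u) (i : Fin m)
    (z : ℝ) (c f : ℝ → ℝ)
    (hf : ∀ A : ℝ, 0 < A → HasDerivAt f (-(c A)) A)
    (pr : ℝ → ℝ)
    (hpr : ∀ A : ℝ, pr A =
      (∑ u : Fin m, ((A + D u) ^ 2)⁻¹) * (A + D i) ^ 2 * A * Real.exp (f A)) :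
    ∀ A : ℝ, 0 < A →
      0 < pr A ∧ DifferentiableAt ℝ pr A ∧
      deriv pr A / pr A =
        (2 / (A + D i) + (1 + z ^ 2) * D i / (4 * A * (A + D i)))
          - (1 / 2) * (((D i / (A + D i)) / 2 - 2) * (1 / A)
              + 4 * (∑ u : Fin m, ((A + D u) ^ 3)⁻¹)
                  / (∑ u : Fin m, ((A + D u) ^ 2)⁻¹))
          - c A
          - z ^ 2 * (D i / (A + D i)) / (4 * A) := by
  have hprf : pr = fun A =>
      (∑ u : Fin m, ((A + D u) ^ 2)⁻¹) * (A + D i) ^ 2 * A * Real.exp (f A) :=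
    funext hpr
  intro A hA
  have hADpos : ∀ u : Fin m, 0 < A + D u := fun u => by
    have := hD u; linarith
  have hADne : ∀ u : Fin m, A + D u ≠ 0 := fun u => (hADpos u).ne'
  have hs2pos : 0 < ∑ u : Fin m, ((A + D u) ^ 2)⁻¹ := by
    apply Finset.sum_pos
    · intro u _
      have := hADpos u
      positivity
    · exact Finset.univ_nonempty_iff.2 ⟨⟨0, hm⟩⟩
  have hs2ne : (∑ u : Fin m, ((A + D u) ^ 2)⁻¹) ≠ 0 := hs2pos.ne'
  -- positivity
  have hpos : 0 < pr A := by
    rw [hpr A]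
    have := hADpos i
    positivity
  -- derivative of the sum part
  have hsum : HasDerivAt (fun x : ℝ => ∑ u : Fin m, ((x + D u) ^ 2)⁻¹)
      (-2 * ∑ u : Fin m, ((A + D u) ^ 3)⁻¹) A := by
    have h : HasDerivAt (fun x : ℝ => ∑ u : Fin m, ((x + D u) ^ 2)⁻¹)
        (∑ u : Fin m, -(2 * (A + D u) ^ 1 * 1) / ((A + D u) ^ 2) ^ 2) A := by
      apply HasDerivAt.fun_sum
      intro u _
      exact (((hasDerivAt_id A).add_const (D u)).pow 2).inv (pow_ne_zero 2 (hADne u))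
    convert h using 1
    rw [Finset.mul_sum]
    apply Finset.sum_congr rfl
    intro u _
    have h3 := hADne u
    field_simp
  have hAD : HasDerivAt (fun x : ℝ => (x + D i) ^ 2) (2 * (A + D i) ^ 1 * 1) A :=
    ((hasDerivAt_id A).add_const (D i)).pow 2
  have hexp : HasDerivAt (fun x : ℝ => Real.exp (f x)) (-(c A) * Real.exp (f A)) A := by
    have := (hf A hA).exp
    convert this using 1
    ring
  have hderiv : HasDerivAt pr
      ((((-2 * ∑ u : Fin m, ((A + D u) ^ 3)⁻¹) * (A + D i) ^ 2
          + (∑ u : Fin m, ((A + D u) ^ 2)⁻¹) * (2 * (A + D i) ^ 1 * 1)) * A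
          + (∑ u : Fin m, ((A + D u) ^ 2)⁻¹) * (A + D i) ^ 2 * 1) * Real.exp (f A)
        + (∑ u : Fin m, ((A + D u) ^ 2)⁻¹) * (A + D i) ^ 2 * A
          * (-(c A) * Real.exp (f A))) A := by
    rw [hprf]
    exact (((hsum.mul hAD).mul (hasDerivAt_id A)).mul hexp)
  refine ⟨hpos, hderiv.differentiableAt, ?_⟩
  rw [hderiv.deriv, hpr A]
  have hexpne : Real.exp (f A) ≠ 0 := (Real.exp_pos _).ne'
  have hAne : A ≠ 0 := hA.ne'
  have hADine := hADne i
  generalize (∑ u : Fin m, ((A + D u) ^ 3)⁻¹) = s3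
  generalize hg2 : (∑ u : Fin m, ((A + D u) ^ 2)⁻¹) = s2
  rw [hg2] at hs2ne
  field_simp
  ring
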